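/- For every integer k ≥ 0 and every j with 0 ≤ j ≤ k, the quantity b(k,j) = ((2k+1)/(2j+1)) * C(k+j, 2j) is an integer. -/

import Mathlib

theorem b_kj_is_integer (k j : ℕ) (hj : j ≤ k) :
    ∃ m : ℤ, (((2 * k + 1) : ℚ) / (2 * j + 1)) * (Nat.choose (k + j) (2 * j) : ℚ) = m := by
  refine ⟨(Nat.choose (k + j) (2 * j) : ℤ) + 2 * Nat.choose (k + j) (2 * j + 1), ?_⟩
  have key : Nat.choose (k + j) (2 * j + 1) * (2 * j + 1)
      = Nat.choose (k + j) (2 * j) * (k - j) := by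
    have := Nat.choose_succ_right_eq (k + j) (2 * j)
    simpa [show k + j - 2 * j = k - j by omega] using this
  have h2 : (2 * k + 1) * Nat.choose (k + j) (2 * j)
      = (2 * j + 1) * (Nat.choose (k + j) (2 * j) + 2 * Nat.choose (k + j) (2 * j + 1)) := by
    have hk : 2 * k + 1 = (2 * j + 1) + 2 * (k - j) := by omega
    rw [hk]
    ring_nf
    rw [Nat.add_comm k j] at key
    ring_nf at key
    nlinarith [key]
  have hne : ((2 * j + 1 : ℚ)) ≠ 0 := by positivity
  field_simp
  have := congrArg (fun n : ℕ => (n : ℚ)) h2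
  push_cast at this
  push_cast
  linarith [this]
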